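/- If m is an invertible k x k matrix over a field, then there exists a chain of subsets empty set = J_0 ⊂ J_1 ⊂ ... ⊂ J_k = {1,...,k} with |J_r| = r such that for each r the minor of m with row set {1,...,r} and column set J_r is nonzero. -/

import Mathlib

open Matrix Submodule Module

private lemma step4 {K : Type*} [Field K] {k r : ℕ} (m : Matrix (Fin k) (Fin k) K)
    (hm : IsUnit m.det) (hr : r < k) (J : Finset (Fin k)) (hc : J.card = r)
    (hdet : (Matrix.of fun i j : Fin r =>
        m (Fin.castLE hr.le i) (J.orderEmbOfFin hc j)).det ≠ 0) :
    ∃ j₀ ∉ J, ∀ hc' : (insert j₀ J).card = r + 1,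
      (Matrix.of fun i j : Fin (r + 1) =>
        m (Fin.castLE hr i) ((insert j₀ J).orderEmbOfFin hc' j)).det ≠ 0 := by
  classical
  set u : Fin k → (Fin (r + 1) → K) := fun j i => m (Fin.castLE hr i) j with hu
  set s : Set (Fin k) := (J : Set (Fin k)) with hs
  -- the small minor is invertible, hence its columns are independent
  have hA : IsUnit (Matrix.of fun i j : Fin r =>
      m (Fin.castLE hr.le i) (J.orderEmbOfFin hc j)) :=
    (Matrix.isUnit_iff_isUnit_det _).mpr (isUnit_iff_ne_zero.mpr hdet)
  have hli0 : LinearIndependent K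
      (fun p : Fin r => fun i : Fin r => m (Fin.castLE hr.le i) (J.orderEmbOfFin hc p)) :=
    Matrix.linearIndependent_cols_iff_isUnit.mpr hA
  -- lift independence to columns with r+1 rows
  have hliF : LinearIndependent K (fun p : Fin r => u (J.orderEmbOfFin hc p)) := by
    apply LinearIndependent.of_comp (LinearMap.funLeft K K (Fin.castLE (Nat.le_succ r)))
    exact hli0
  -- independence as a set-indexed family
  have hliJ : LinearIndependent K (fun x : s => u x) := by
    rw [← linearIndependent_equiv ((J.orderIsoOfFin hc).toEquiv.trans
      (Equiv.subtypeEquivRight (fun x => by simp [hs])))]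
    convert hliF with p
    rfl
  have hinj : Set.InjOn u s := by
    rw [Set.injOn_iff_injective]
    exact hliJ.injective
  have hliSet : LinearIndependent K (fun x : (u '' s) => (x : Fin (r + 1) → K)) :=
    (linearIndepOn_iff_image hinj).mp hliJ
  -- find a column outside the span
  have hex : ∃ j₀, u j₀ ∉ span K (u '' s) := by
    by_contra h
    push_neg at h
    have h1 : span K (Set.range u) ≤ span K (u '' s) := by
      rw [span_le]
      rintro x ⟨j, rfl⟩
      exact h j
    have h2 : finrank K (span K (u '' s)) ≤ r := by
      have himg : u '' s = ↑(J.image u) := by simp [hs]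
      rw [himg]
      exact (finrank_span_finset_le_card _).trans (Finset.card_image_le.trans hc.le)
    have h3 : finrank K (span K (Set.range u)) = r + 1 := by
      have hmli : LinearIndependent K (fun i => m i) :=
        Matrix.linearIndependent_rows_iff_isUnit.mpr ((Matrix.isUnit_iff_isUnit_det m).mpr hm)
      have hB : LinearIndependent K
          (fun i => (Matrix.of fun i j => m (Fin.castLE hr i) j : Matrix (Fin (r+1)) (Fin k) K) i) :=
        hmli.comp (Fin.castLE hr) (Fin.castLE_injective hr)
      have h4 := hB.rank_matrix
      rw [Matrix.rank_eq_finrank_span_cols] at h4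
      have h5 : Set.range (Matrix.of fun i j => m (Fin.castLE hr i) j :
          Matrix (Fin (r+1)) (Fin k) K).col = Set.range u := rfl
      rw [h5] at h4
      simpa using h4
    have := Submodule.finrank_mono h1
    omega
  obtain ⟨j₀, hj₀⟩ := hex
  have hj₀J : j₀ ∉ J := fun hmem => hj₀ (subset_span ⟨j₀, hmem, rfl⟩)
  refine ⟨j₀, hj₀J, ?_⟩
  intro hc'
  have hins : LinearIndependent K
      (fun b : (insert (u j₀) (u '' s) : Set (Fin (r+1) → K)) => (b : Fin (r+1) → K)) :=
    LinearIndepOn.id_insert hliSet hj₀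
  set e' := (insert j₀ J).orderEmbOfFin hc' with he'
  have hmemf : ∀ p : Fin (r + 1), u (e' p) ∈ insert (u j₀) (u '' s) := by
    intro p
    have hp := Finset.orderEmbOfFin_mem (insert j₀ J) hc' p
    rcases Finset.mem_insert.mp hp with h | h
    · left; rw [h]
    · right; exact ⟨_, h, rfl⟩
  have hinj' : Set.InjOn u (insert j₀ s) := by
    intro a ha b hb hab
    rcases ha with rfl | ha <;> rcases hb with rfl | hb
    · rfl
    · exact absurd (hab ▸ subset_span (a := u b) ⟨b, hb, rfl⟩) hj₀
    · exact absurd (hab ▸ subset_span (a := u a) ⟨a, ha, rfl⟩) hj₀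
    · exact hinj ha hb hab
  set f : Fin (r + 1) → (insert (u j₀) (u '' s) : Set (Fin (r+1) → K)) :=
    fun p => ⟨u (e' p), hmemf p⟩ with hf
  have hfinj : Function.Injective f := by
    intro p q hpq
    have h1 : u (e' p) = u (e' q) := congrArg Subtype.val hpq
    have hmem : ∀ x : Fin (r+1), (e' x : Fin k) ∈ insert j₀ s := by
      intro x
      rcases Finset.mem_insert.mp (Finset.orderEmbOfFin_mem (insert j₀ J) hc' x) with h | h
      · exact Set.mem_insert_iff.mpr (Or.inl h)
      · exact Set.mem_insert_iff.mpr (Or.inr (Finset.mem_coe.mpr h))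
    have := hinj' (hmem p) (hmem q) h1
    exact e'.injective this
  have hfin : LinearIndependent K (fun p : Fin (r + 1) => u (e' p)) := hins.comp f hfinj
  have hres : LinearIndependent K (fun p : Fin (r + 1) =>
      (Matrix.of fun i q : Fin (r+1) => m (Fin.castLE hr i) (e' q))ᵀ p) := hfin
  have := (Matrix.isUnit_iff_isUnit_det _).mp (Matrix.linearIndependent_cols_iff_isUnit.mp hres)
  exact this.ne_zero

private lemma minor_congr4 {K : Type*} [Field K] {k r : ℕ} (m : Matrix (Fin k) (Fin k) K)
    (hr hr' : r ≤ k) {J₁ J₂ : Finset (Fin k)} (h : J₁ = J₂)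
    (hc1 : J₁.card = r) (hc2 : J₂.card = r)
    (hd : (Matrix.of fun i j : Fin r =>
        m (Fin.castLE hr i) (J₂.orderEmbOfFin hc2 j)).det ≠ 0) :
    (Matrix.of fun i j : Fin r =>
        m (Fin.castLE hr' i) (J₁.orderEmbOfFin hc1 j)).det ≠ 0 := by
  subst h
  exact hd

/-- If `m` is an invertible `k × k` matrix over a field, then there is a chain of subsets
`∅ = J₀ ⊂ J₁ ⊂ ⋯ ⊂ J_k = {1, …, k}` with `|J_r| = r` such that for each `r` the minor of `m`
with row set `{1, …, r}` and column set `J_r` is nonzero. -/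
theorem stmt4 {K : Type*} [Field K] {k : ℕ} (m : Matrix (Fin k) (Fin k) K)
    (hm : IsUnit m.det) :
    ∃ J : ℕ → Finset (Fin k),
      J 0 = ∅ ∧ J k = Finset.univ ∧
      (∀ r ≤ k, (J r).card = r) ∧
      (∀ r < k, J r ⊂ J (r + 1)) ∧
      (∀ r (hr : r ≤ k) (hc : (J r).card = r),
        Matrix.det (Matrix.of fun i j : Fin r =>
          m (Fin.castLE hr i) ((J r).orderEmbOfFin hc j)) ≠ 0) := by
  classical
  suffices H : ∀ n, ∀ hnk : n ≤ k, ∃ J : ℕ → Finset (Fin k),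
      J 0 = ∅ ∧
      (∀ r ≤ n, (J r).card = r) ∧
      (∀ r < n, J r ⊂ J (r + 1)) ∧
      (∀ r (hr : r ≤ n) (hc : (J r).card = r),
        Matrix.det (Matrix.of fun i j : Fin r =>
          m (Fin.castLE (hr.trans hnk) i) ((J r).orderEmbOfFin hc j)) ≠ 0) by
    obtain ⟨J, h0, hcard, hchain, hdet⟩ := H k le_rfl
    refine ⟨J, h0, ?_, hcard, hchain, hdet⟩
    have h1 := hcard k le_rfl
    exact (Finset.card_eq_iff_eq_univ _).mp (by rw [Fintype.card_fin]; exact h1)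
  intro n
  induction n with
  | zero =>
    intro hnk
    refine ⟨fun _ => ∅, rfl, ?_, by omega, ?_⟩
    · intro r hr; interval_cases r; simp
    · intro r hr hc
      interval_cases r
      simp [Matrix.det_fin_zero]
  | succ n ih =>
    intro hnk
    obtain ⟨J, h0, hcard, hchain, hdet⟩ := ih (Nat.le_of_succ_le hnk)
    have hnk' : n < k := hnk
    obtain ⟨j₀, hj₀, hdet'⟩ := step4 m hm hnk' (J n) (hcard n le_rfl)
      (hdet n le_rfl (hcard n le_rfl))
    refine ⟨fun r => if r = n + 1 then insert j₀ (J n) else J r, by simp [h0], ?_, ?_, ?_⟩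
    · intro r hr
      dsimp only
      by_cases h : r = n + 1
      · rw [if_pos h]
        subst h
        rw [Finset.card_insert_of_notMem hj₀, hcard n le_rfl]
      · rw [if_neg h]
        exact hcard r (by omega)
    · intro r hr
      dsimp only
      by_cases h : r = n
      · rw [if_neg (by omega), if_pos (by omega)]
        subst h
        exact Finset.ssubset_insert hj₀
      · rw [if_neg (by omega), if_neg (by omega)]
        exact hchain r (by omega)
    · intro r hr hc
      by_cases h : r = n + 1
      · have hc2 : (insert j₀ (J n)).card = n + 1 := by
          rw [Finset.card_insert_of_notMem hj₀, hcard n le_rfl]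
        subst h
        exact minor_congr4 m _ _ (if_pos rfl) hc hc2 (hdet' hc2)
      · have hc2 : (J r).card = r := by
          have : (if r = n + 1 then insert j₀ (J n) else J r) = J r := if_neg h
          rw [← this]
          exact hc
        exact minor_congr4 m _ _ (if_neg h) hc hc2 (hdet r (by omega) hc2)
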